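/- Let [0,1] be invariant for a map u ↦ u + Δt D(u) for 0 ≤ Δt ≤ τ and for u ↦ u + Δt S(u) for 0 ≤ Δt ≤ 2/μ (componentwise for u ∈ [0,1]^m, where D, S : ℝ^m → ℝ^m), with τ, μ > 0. Then [0,1]^m is invariant for u ↦ u + Δt (D(u) + S(u)) for all 0 ≤ Δt ≤ 2τ/(2 + μτ). -/

import Mathlib

/-- If `[0,1]^m` is invariant for `u ↦ u + Δt D(u)` for `0 ≤ Δt ≤ τ` and for
`u ↦ u + Δt S(u)` for `0 ≤ Δt ≤ 2/μ`, then it is invariant for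
`u ↦ u + Δt (D(u) + S(u))` for `0 ≤ Δt ≤ 2τ/(2 + μτ)`. -/
theorem stmt_15 (m : ℕ) (D S : (Fin m → ℝ) → (Fin m → ℝ)) (τ μ : ℝ)
    (hτ : 0 < τ) (hμ : 0 < μ)
    (hD : ∀ u : Fin m → ℝ, (∀ i, u i ∈ Set.Icc (0 : ℝ) 1) →
      ∀ Δt : ℝ, 0 ≤ Δt → Δt ≤ τ → ∀ i, (u + Δt • D u) i ∈ Set.Icc (0 : ℝ) 1)
    (hS : ∀ u : Fin m → ℝ, (∀ i, u i ∈ Set.Icc (0 : ℝ) 1) →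
      ∀ Δt : ℝ, 0 ≤ Δt → Δt ≤ 2 / μ → ∀ i, (u + Δt • S u) i ∈ Set.Icc (0 : ℝ) 1) :
    ∀ u : Fin m → ℝ, (∀ i, u i ∈ Set.Icc (0 : ℝ) 1) →
      ∀ Δt : ℝ, 0 ≤ Δt → Δt ≤ 2 * τ / (2 + μ * τ) →
        ∀ i, (u + Δt • (D u + S u)) i ∈ Set.Icc (0 : ℝ) 1 := by
  intro u hu Δt h0 h1 i
  have hden : (0:ℝ) < 2 + μ * τ := by positivity
  have hDi := hD u hu τ hτ.le le_rfl i
  have hSi := hS u hu (2 / μ) (by positivity) le_rfl i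
  simp only [Pi.add_apply, Pi.smul_apply, smul_eq_mul, Set.mem_Icc] at hDi hSi hu ⊢
  obtain ⟨hD0, hD1⟩ := hDi
  obtain ⟨hS0, hS1⟩ := hSi
  obtain ⟨hu0, hu1⟩ := hu i
  -- coefficients
  set a := Δt / τ with ha
  set b := Δt * μ / 2 with hb
  have ha0 : 0 ≤ a := by positivity
  have hb0 : 0 ≤ b := by positivity
  have hab : a + b ≤ 1 := by
    rw [ha, hb, div_add_div _ _ (ne_of_gt hτ) (by norm_num : (2:ℝ) ≠ 0),
      div_le_one (by positivity)]
    have : Δt * (2 + μ * τ) ≤ 2 * τ := by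
      calc Δt * (2 + μ * τ) ≤ 2 * τ / (2 + μ * τ) * (2 + μ * τ) := by
            exact mul_le_mul_of_nonneg_right h1 hden.le
        _ = 2 * τ := by field_simp
    nlinarith
  have key : u i + Δt * (D u i + S u i)
      = a * (u i + τ * D u i) + b * (u i + 2 / μ * S u i) + (1 - a - b) * u i := by
    rw [ha, hb]
    field_simp [ha, hb]
    ring
  rw [key]
  constructor
  · nlinarith [mul_nonneg ha0 hD0, mul_nonneg hb0 hS0]
  · nlinarith [mul_le_mul_of_nonneg_left hD1 ha0, mul_le_mul_of_nonneg_left hS1 hb0]
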